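/- arXiv:1512.07424 — 5 statements merged into one kernel-verified Lean document; each statement's English description precedes it below -/
import Mathlib

section
/- (Corollary 3.2) The Lebesgue constant is bounded by Λ ≤ C · D · √e · n / |det V|, where e is Euler's number and D = ( max{ √( min_{1≤i≤n} c_i² / Π_{i=1}^n c_i² ), √( min_{1≤i≤n} r_i² / Π_{i=1}^n r_i² ) } )^{-1}, with c_i² = Σ_{j=1}^n |φ_j(x_i)|² (the squared ℓ²-norm of the i-th column of V) and r_i² = Σ_{j=1}^n |φ_i(x_j)|² (the squared ℓ²-norm of the i-th row of V). -/
open MvPolynomial Finset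

/-- **Hadamard's inequality**: the absolute value of the determinant is at most the
product of the Euclidean norms of the columns. -/
lemma aux_hadamard {n : ℕ} (A : Matrix (Fin n) (Fin n) ℝ) :
    |A.det| ≤ ∏ j, Real.sqrt (∑ i, A i j ^ 2) := by
  classical
  have hfr : Module.finrank ℝ (EuclideanSpace ℝ (Fin n)) = Fintype.card (Fin n) := by
    simp [finrank_euclideanSpace]
  set f : Fin n → EuclideanSpace ℝ (Fin n) :=
    fun j => (EuclideanSpace.equiv (Fin n) ℝ).symm fun i => A i j with hf
  set S := EuclideanSpace.basisFun (Fin n) ℝ with hS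
  obtain ⟨b, h2⟩ : ∃ b : OrthonormalBasis (Fin n) ℝ (EuclideanSpace ℝ (Fin n)),
      b.toBasis.det f = ∏ i, (inner ℝ (b i) (f i) : ℝ) :=
    ⟨InnerProductSpace.gramSchmidtOrthonormalBasis (𝕜 := ℝ) hfr f,
     InnerProductSpace.gramSchmidtOrthonormalBasis_det (𝕜 := ℝ) hfr f⟩
  have hM : S.toBasis.toMatrix f = A := by
    ext i j
    simp [Module.Basis.toMatrix_apply, hS, hf]
  have hdet1 : S.toBasis.det f = A.det := by
    rw [Module.Basis.det_apply, hM]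
  have hsplit : S.toBasis.det f = S.toBasis.det b.toBasis * b.toBasis.det f := by
    rw [Module.Basis.det_apply, Module.Basis.det_apply, Module.Basis.det_apply,
      ← Module.Basis.toMatrix_mul_toMatrix S.toBasis b.toBasis f, Matrix.det_mul]
  have h1 : |S.toBasis.det ⇑b.toBasis| = 1 := by
    have := S.det_to_matrix_orthonormalBasis b
    rwa [Real.norm_eq_abs] at this
  have h3 : ∀ i, |(inner ℝ (b i) (f i) : ℝ)| ≤ Real.sqrt (∑ k, A k i ^ 2) := by
    intro i
    calc |(inner ℝ (b i) (f i) : ℝ)| ≤ ‖b i‖ * ‖f i‖ := abs_real_inner_le_norm _ _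
    _ = ‖f i‖ := by rw [b.orthonormal.1 i, one_mul]
    _ = Real.sqrt (∑ k, A k i ^ 2) := by
        rw [EuclideanSpace.norm_eq]
        congr 1
        refine Finset.sum_congr rfl fun k _ => ?_
        simp [hf, Real.norm_eq_abs, sq_abs]
  calc |A.det| = |S.toBasis.det ⇑b.toBasis| * |b.toBasis.det f| := by
        rw [← abs_mul, ← hsplit, hdet1]
  _ = |∏ i, (inner ℝ (b i) (f i) : ℝ)| := by rw [h1, one_mul, h2]
  _ = ∏ i, |(inner ℝ (b i) (f i) : ℝ)| := Finset.abs_prod _ _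
  _ ≤ ∏ i, Real.sqrt (∑ k, A k i ^ 2) :=
      Finset.prod_le_prod (fun i _ => abs_nonneg _) (fun i _ => h3 i)

/-- Key estimate: the squared Euclidean norm of the `i`-th row of `V⁻¹` times `det V ^ 2`
is bounded by the product of the squared column norms of `V` over all columns except `i`. -/
lemma aux_key {n : ℕ} (V : Matrix (Fin n) (Fin n) ℝ) (hdet : V.det ≠ 0) (i : Fin n) :
    V.det ^ 2 * (∑ j, (V⁻¹ i j) ^ 2) ≤ ∏ k ∈ Finset.univ.erase i, (∑ j, (V j k) ^ 2) := by
  classical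
  have hu : IsUnit V.det := isUnit_iff_ne_zero.mpr hdet
  set s := ∑ j, (V⁻¹ i j) ^ 2 with hs
  have hrow : ∑ j, V⁻¹ i j * V j i = 1 := by
    have h1 := Matrix.nonsing_inv_mul V hu
    have h2 := congrFun (congrFun h1 i) i
    simpa [Matrix.mul_apply, Matrix.one_apply] using h2
  have hs_pos : 0 < s := by
    rcases (Finset.sum_nonneg (fun j _ => sq_nonneg (V⁻¹ i j))).lt_or_eq with h | h
    · exact h
    · exfalso
      have hz : ∀ j ∈ Finset.univ, (V⁻¹ i j) ^ 2 = 0 :=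
        (Finset.sum_eq_zero_iff_of_nonneg (fun j _ => sq_nonneg _)).mp h.symm
      have : ∑ j, V⁻¹ i j * V j i = 0 := by
        refine Finset.sum_eq_zero fun j _ => ?_
        have := hz j (Finset.mem_univ j)
        rw [pow_eq_zero_iff (two_ne_zero)] at this
        rw [this, zero_mul]
      rw [hrow] at this; exact one_ne_zero this
  set u : Fin n → ℝ := fun j => V⁻¹ i j / s with hu'
  have hadj : V.adjugate = V.det • V⁻¹ := by
    rw [Matrix.inv_def, smul_smul, Ring.inverse_eq_inv', mul_inv_cancel₀ hdet, one_smul]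
  have hdetW : (V.updateCol i u).det = V.det := by
    rw [← Matrix.cramer_apply, Matrix.cramer_eq_adjugate_mulVec, hadj]
    have : ((V.det • V⁻¹).mulVec u) i = V.det * ∑ j, V⁻¹ i j * (V⁻¹ i j / s) := by
      simp [Matrix.mulVec, Matrix.smul_apply, dotProduct, Finset.mul_sum, hu', mul_assoc]
    rw [this]
    have : ∑ j, V⁻¹ i j * (V⁻¹ i j / s) = s / s := by
      rw [Finset.sum_div]
      exact Finset.sum_congr rfl fun j _ => by rw [sq]; ring
    rw [this, div_self hs_pos.ne', mul_one]
  have hH := aux_hadamard (V.updateCol i u)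
  rw [hdetW] at hH
  have hsum_u : ∑ j, (u j) ^ 2 = 1 / s := by
    simp only [hu', div_pow]
    rw [← Finset.sum_div, ← hs, sq]
    rw [div_eq_div_iff (by positivity) (by positivity)]
    ring
  have hprod : ∏ k, Real.sqrt (∑ j, ((V.updateCol i u) j k) ^ 2)
      = Real.sqrt (1 / s) * ∏ k ∈ Finset.univ.erase i, Real.sqrt (∑ j, (V j k) ^ 2) := by
    rw [← Finset.mul_prod_erase Finset.univ _ (Finset.mem_univ i)]
    congr 1
    · rw [← hsum_u]
      congr 1
      exact Finset.sum_congr rfl fun j _ => by rw [Matrix.updateCol_self]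
    · refine Finset.prod_congr rfl fun k hk => ?_
      congr 1
      refine Finset.sum_congr rfl fun j _ => ?_
      rw [Matrix.updateCol_ne (Finset.ne_of_mem_erase hk)]
  rw [hprod] at hH
  -- square both sides
  have hsq := mul_self_le_mul_self (abs_nonneg V.det) hH
  have hP : (Real.sqrt (1 / s) * ∏ k ∈ Finset.univ.erase i, Real.sqrt (∑ j, (V j k) ^ 2))
      * (Real.sqrt (1 / s) * ∏ k ∈ Finset.univ.erase i, Real.sqrt (∑ j, (V j k) ^ 2))
      = (1 / s) * ∏ k ∈ Finset.univ.erase i, (∑ j, (V j k) ^ 2) := by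
    rw [mul_mul_mul_comm, ← Finset.prod_mul_distrib,
      Real.mul_self_sqrt (by positivity)]
    congr 1
    exact Finset.prod_congr rfl fun k _ =>
      Real.mul_self_sqrt (Finset.sum_nonneg fun j _ => sq_nonneg _)
  rw [hP, abs_mul_abs_self] at hsq
  calc V.det ^ 2 * s = (V.det * V.det) * s := by ring
  _ ≤ ((1 / s) * ∏ k ∈ Finset.univ.erase i, (∑ j, (V j k) ^ 2)) * s :=
      mul_le_mul_of_nonneg_right hsq hs_pos.le
  _ = ∏ k ∈ Finset.univ.erase i, (∑ j, (V j k) ^ 2) := by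
      field_simp

/-- Corollary 3.2: the Lebesgue constant is bounded by `Λ ≤ C * D * √e * n / |det V|`, where
`D = (max { √(min_i c i / ∏ i, c i), √(min_i r i / ∏ i, r i) })⁻¹` with `c i` the squared
`ℓ²`-norm of the `i`-th column of `V` and `r i` the squared `ℓ²`-norm of the `i`-th row. -/
theorem stmt_3
    (d n : ℕ) (hd : 0 < d) (hn : 0 < n)
    (x : Fin n → (Fin d → ℝ)) (hx : Function.Injective x)
    (φ : Fin n → MvPolynomial (Fin d) ℝ)
    (V : Matrix (Fin n) (Fin n) ℝ)
    (hV : ∀ i j, V i j = eval (x j) (φ i))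
    (hdet : V.det ≠ 0)
    (K : Set (Fin d → ℝ)) (hK : K = convexHull ℝ (Set.range x))
    (ℓ : Fin n → (Fin d → ℝ) → ℝ)
    (hℓ : ∀ i y, ℓ i y = ∑ j, V⁻¹ i j * eval y (φ j))
    (C : ℝ)
    (hC : C = ⨆ y : K, Real.sqrt (∑ i, (eval (y : Fin d → ℝ) (φ i)) ^ 2))
    (Λ : ℝ)
    (hΛ : Λ = ⨆ y : K, ∑ i, |ℓ i (y : Fin d → ℝ)|)
    (c r : Fin n → ℝ)
    (hc : ∀ i, c i = ∑ j, (eval (x i) (φ j)) ^ 2)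
    (hr : ∀ i, r i = ∑ j, (eval (x j) (φ i)) ^ 2)
    (D : ℝ)
    (hD : D = (max (Real.sqrt ((⨅ i, c i) / ∏ i, c i))
        (Real.sqrt ((⨅ i, r i) / ∏ i, r i)))⁻¹) :
    Λ ≤ C * D * Real.sqrt (Real.exp 1) * n / |V.det| := by
  classical
  haveI : Nonempty (Fin n) := ⟨⟨0, hn⟩⟩
  have hdet_abs : 0 < |V.det| := abs_pos.mpr hdet
  -- c and r as column/row norms
  have hcV : ∀ i, c i = ∑ j, (V j i) ^ 2 := fun i => by
    rw [hc]; exact Finset.sum_congr rfl fun j _ => by rw [hV j i]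
  have hrV : ∀ i, r i = ∑ j, (V i j) ^ 2 := fun i => by
    rw [hr]; exact Finset.sum_congr rfl fun j _ => by rw [hV i j]
  have hc_pos : ∀ i, 0 < c i := by
    intro i
    rw [hcV i]
    rcases (Finset.sum_nonneg fun j _ => sq_nonneg (V j i)).lt_or_eq with h | h
    · exact h
    · exfalso
      apply hdet
      apply Matrix.det_eq_zero_of_column_eq_zero i
      intro j
      have := (Finset.sum_eq_zero_iff_of_nonneg fun j _ => sq_nonneg (V j i)).mp h.symm j
        (Finset.mem_univ j)
      exact pow_eq_zero_iff two_ne_zero |>.mp this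
  have hr_pos : ∀ i, 0 < r i := by
    intro i
    rw [hrV i]
    rcases (Finset.sum_nonneg fun j _ => sq_nonneg (V i j)).lt_or_eq with h | h
    · exact h
    · exfalso
      apply hdet
      apply Matrix.det_eq_zero_of_row_eq_zero i
      intro j
      have := (Finset.sum_eq_zero_iff_of_nonneg fun j _ => sq_nonneg (V i j)).mp h.symm j
        (Finset.mem_univ j)
      exact pow_eq_zero_iff two_ne_zero |>.mp this
  set mc := ⨅ i, c i with hmc
  set mr := ⨅ i, r i with hmr
  have hmc_le : ∀ i, mc ≤ c i := fun i => ciInf_le (Set.finite_range c).bddBelow i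
  have hmr_le : ∀ i, mr ≤ r i := fun i => ciInf_le (Set.finite_range r).bddBelow i
  have hmc_pos : 0 < mc := by
    obtain ⟨i0, _, hi0⟩ := Finset.exists_min_image Finset.univ c Finset.univ_nonempty
    exact lt_of_lt_of_le (hc_pos i0) (le_ciInf fun j => hi0 j (Finset.mem_univ j))
  have hmr_pos : 0 < mr := by
    obtain ⟨i0, _, hi0⟩ := Finset.exists_min_image Finset.univ r Finset.univ_nonempty
    exact lt_of_lt_of_le (hr_pos i0) (le_ciInf fun j => hi0 j (Finset.mem_univ j))
  set Pc := ∏ i, c i with hPc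
  set Pr := ∏ i, r i with hPr
  have hPc_pos : 0 < Pc := Finset.prod_pos fun i _ => hc_pos i
  have hPr_pos : 0 < Pr := Finset.prod_pos fun i _ => hr_pos i
  set SA := Real.sqrt (Pc / mc) with hSA
  set SB := Real.sqrt (Pr / mr) with hSB
  have hSA_pos : 0 < SA := Real.sqrt_pos.mpr (div_pos hPc_pos hmc_pos)
  have hSB_pos : 0 < SB := Real.sqrt_pos.mpr (div_pos hPr_pos hmr_pos)
  have hD' : D = min SA SB := by
    rw [hD]
    have e1 : Real.sqrt (mc / Pc) = SA⁻¹ := by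
      rw [hSA, ← Real.sqrt_inv, inv_div]
    have e2 : Real.sqrt (mr / Pr) = SB⁻¹ := by
      rw [hSB, ← Real.sqrt_inv, inv_div]
    rw [e1, e2]
    rcases le_total SA SB with h | h
    · rw [min_eq_left h, max_eq_left (inv_anti₀ hSA_pos h), inv_inv]
    · rw [min_eq_right h, max_eq_right (inv_anti₀ hSB_pos h), inv_inv]
  have hD_pos : 0 < D := by rw [hD']; exact lt_min hSA_pos hSB_pos
  -- key bounds
  have hkeyA : ∀ i, V.det ^ 2 * (∑ j, (V⁻¹ i j) ^ 2) ≤ Pc / mc := by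
    intro i
    refine le_trans (aux_key V hdet i) ?_
    have h1 : ∏ k ∈ Finset.univ.erase i, (∑ j, (V j k) ^ 2) = Pc / c i := by
      rw [eq_div_iff (hc_pos i).ne']
      calc (∏ k ∈ Finset.univ.erase i, (∑ j, (V j k) ^ 2)) * c i
          = c i * ∏ k ∈ Finset.univ.erase i, c k := by
            rw [mul_comm]
            congr 1
            exact Finset.prod_congr rfl fun k _ => (hcV k).symm
      _ = Pc := Finset.mul_prod_erase Finset.univ c (Finset.mem_univ i)
    rw [h1]
    exact div_le_div_of_nonneg_left hPc_pos.le hmc_pos (hmc_le i)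
  have hkeyB : ∀ j, V.det ^ 2 * (∑ i, (V⁻¹ i j) ^ 2) ≤ Pr / mr := by
    intro j
    have hdetT : (V.transpose).det ≠ 0 := by rwa [Matrix.det_transpose]
    have h0 := aux_key V.transpose hdetT j
    rw [Matrix.det_transpose] at h0
    have e3 : ∀ i, (V.transpose)⁻¹ j i = V⁻¹ i j := fun i => by
      rw [← Matrix.transpose_nonsing_inv]; rfl
    simp only [e3] at h0
    refine le_trans h0 ?_
    have h1 : ∏ k ∈ Finset.univ.erase j, (∑ i, (V.transpose i k) ^ 2) = Pr / r j := by
      rw [eq_div_iff (hr_pos j).ne']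
      calc (∏ k ∈ Finset.univ.erase j, (∑ i, (V.transpose i k) ^ 2)) * r j
          = r j * ∏ k ∈ Finset.univ.erase j, r k := by
            rw [mul_comm]
            congr 1
            refine Finset.prod_congr rfl fun k _ => ?_
            rw [hrV k]
            exact Finset.sum_congr rfl fun i _ => by rw [Matrix.transpose_apply]
      _ = Pr := Finset.mul_prod_erase Finset.univ r (Finset.mem_univ j)
    rw [h1]
    exact div_le_div_of_nonneg_left hPr_pos.le hmr_pos (hmr_le j)
  -- norms of rows of V⁻¹
  set ρ : Fin n → ℝ := fun i => Real.sqrt (∑ j, (V⁻¹ i j) ^ 2) with hρ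
  have hρ_nonneg : ∀ i, 0 ≤ ρ i := fun i => Real.sqrt_nonneg _
  have hρA : ∀ i, ρ i ≤ SA / |V.det| := by
    intro i
    have h1 : ∑ j, (V⁻¹ i j) ^ 2 ≤ (Pc / mc) / V.det ^ 2 := by
      rw [le_div_iff₀ (by positivity)]
      linarith [hkeyA i]
    calc ρ i ≤ Real.sqrt ((Pc / mc) / V.det ^ 2) := Real.sqrt_le_sqrt h1
    _ = SA / |V.det| := by
        rw [Real.sqrt_div (by positivity), Real.sqrt_sq_eq_abs]
  have hρsumA : ∑ i, ρ i ≤ n * SA / |V.det| := by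
    calc ∑ i, ρ i ≤ ∑ _i : Fin n, SA / |V.det| := Finset.sum_le_sum fun i _ => hρA i
    _ = n * SA / |V.det| := by
        rw [Finset.sum_const, Finset.card_univ, Fintype.card_fin, nsmul_eq_mul]; ring
  have hρsumB : ∑ i, ρ i ≤ n * SB / |V.det| := by
    have cs : (∑ i, ρ i) ^ 2 ≤ n * ∑ i, (ρ i) ^ 2 := by
      have := sq_sum_le_card_mul_sum_sq (s := Finset.univ) (f := ρ)
      simpa [Finset.card_univ] using this
    have h2 : ∑ i, (ρ i) ^ 2 = ∑ j, ∑ i, (V⁻¹ i j) ^ 2 := by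
      rw [← Finset.sum_comm]
      exact Finset.sum_congr rfl fun i _ =>
        Real.sq_sqrt (Finset.sum_nonneg fun j _ => sq_nonneg _)
    have h3 : ∑ i, (ρ i) ^ 2 ≤ n * ((Pr / mr) / V.det ^ 2) := by
      rw [h2]
      calc ∑ j, ∑ i, (V⁻¹ i j) ^ 2 ≤ ∑ _j : Fin n, (Pr / mr) / V.det ^ 2 :=
            Finset.sum_le_sum fun j _ => by
              rw [le_div_iff₀ (by positivity)]
              linarith [hkeyB j]
      _ = n * ((Pr / mr) / V.det ^ 2) := by
          rw [Finset.sum_const, Finset.card_univ, Fintype.card_fin, nsmul_eq_mul]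
    have h4 : (∑ i, ρ i) ^ 2 ≤ (n * SB / |V.det|) ^ 2 := by
      refine le_trans cs ?_
      have : (n * SB / |V.det|) ^ 2 = n * (n * ((Pr / mr) / V.det ^ 2)) := by
        rw [div_pow, mul_pow, hSB, Real.sq_sqrt (div_pos hPr_pos hmr_pos).le, sq_abs]
        ring
      rw [this]
      exact mul_le_mul_of_nonneg_left h3 (Nat.cast_nonneg n)
    calc ∑ i, ρ i = Real.sqrt ((∑ i, ρ i) ^ 2) :=
          (Real.sqrt_sq (Finset.sum_nonneg fun i _ => hρ_nonneg i)).symm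
    _ ≤ Real.sqrt ((n * SB / |V.det|) ^ 2) := Real.sqrt_le_sqrt h4
    _ = n * SB / |V.det| := Real.sqrt_sq (by positivity)
  have hρsum : ∑ i, ρ i ≤ n * D / |V.det| := by
    rw [hD']
    rcases min_cases SA SB with ⟨h, _⟩ | ⟨h, _⟩
    · rw [h]; exact hρsumA
    · rw [h]; exact hρsumB
  -- compactness and sup bounds
  have hKcomp : IsCompact K := hK ▸ (Set.finite_range x).isCompact_convexHull ℝ
  have hKne : K.Nonempty := ⟨x ⟨0, hn⟩, hK ▸ subset_convexHull ℝ _ ⟨⟨0, hn⟩, rfl⟩⟩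
  haveI : Nonempty K := hKne.to_subtype
  have hg_cont : Continuous (fun y : Fin d → ℝ => Real.sqrt (∑ i, (eval y (φ i)) ^ 2)) :=
    Real.continuous_sqrt.comp (continuous_finset_sum _ fun i _ =>
      (MvPolynomial.continuous_eval (p := φ i)).pow 2)
  have hbdd : BddAbove (Set.range fun y : K =>
      Real.sqrt (∑ i, (eval (y : Fin d → ℝ) (φ i)) ^ 2)) := by
    rw [← Set.image_eq_range (fun y => Real.sqrt (∑ i, (eval y (φ i)) ^ 2)) K]
    exact (hKcomp.image hg_cont).bddAbove
  have hCb : ∀ y : K, Real.sqrt (∑ i, (eval (y : Fin d → ℝ) (φ i)) ^ 2) ≤ C := fun y => by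
    rw [hC]; exact le_ciSup hbdd y
  have hC0 : 0 ≤ C := le_trans (Real.sqrt_nonneg _) (hCb (Classical.arbitrary K))
  -- pointwise bound
  have hpt : ∀ y : K, ∑ i, |ℓ i (y : Fin d → ℝ)| ≤ C * (n * D) / |V.det| := by
    intro y
    set g := Real.sqrt (∑ j, (eval (y : Fin d → ℝ) (φ j)) ^ 2) with hg
    have hg0 : 0 ≤ g := Real.sqrt_nonneg _
    have h1 : ∀ i, |ℓ i (y : Fin d → ℝ)| ≤ ρ i * g := by
      intro i
      rw [hℓ]
      have cs : (∑ j, |V⁻¹ i j| * |eval (y : Fin d → ℝ) (φ j)|) ^ 2 ≤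
          (∑ j, (V⁻¹ i j) ^ 2) * (∑ j, (eval (y : Fin d → ℝ) (φ j)) ^ 2) := by
        have := Finset.sum_mul_sq_le_sq_mul_sq Finset.univ
          (fun j => |V⁻¹ i j|) (fun j => |eval (y : Fin d → ℝ) (φ j)|)
        simpa [sq_abs] using this
      calc |∑ j, V⁻¹ i j * eval (y : Fin d → ℝ) (φ j)|
          ≤ ∑ j, |V⁻¹ i j * eval (y : Fin d → ℝ) (φ j)| :=
            Finset.abs_sum_le_sum_abs _ _
      _ = ∑ j, |V⁻¹ i j| * |eval (y : Fin d → ℝ) (φ j)| := by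
            exact Finset.sum_congr rfl fun j _ => abs_mul _ _
      _ = Real.sqrt ((∑ j, |V⁻¹ i j| * |eval (y : Fin d → ℝ) (φ j)|) ^ 2) :=
            (Real.sqrt_sq (Finset.sum_nonneg fun j _ =>
              mul_nonneg (abs_nonneg _) (abs_nonneg _))).symm
      _ ≤ Real.sqrt ((∑ j, (V⁻¹ i j) ^ 2) * (∑ j, (eval (y : Fin d → ℝ) (φ j)) ^ 2)) :=
            Real.sqrt_le_sqrt cs
      _ = ρ i * g := by
            rw [Real.sqrt_mul (Finset.sum_nonneg fun j _ => sq_nonneg _)]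
    calc ∑ i, |ℓ i (y : Fin d → ℝ)| ≤ ∑ i, ρ i * g := Finset.sum_le_sum fun i _ => h1 i
    _ = (∑ i, ρ i) * g := (Finset.sum_mul _ _ _).symm
    _ ≤ (n * D / |V.det|) * C :=
        mul_le_mul hρsum (hCb y) hg0 (by positivity)
    _ = C * (n * D) / |V.det| := by ring
  -- conclude
  rw [hΛ]
  refine ciSup_le fun y => le_trans (hpt y) ?_
  have he : (1 : ℝ) ≤ Real.sqrt (Real.exp 1) := by
    rw [show (1 : ℝ) = Real.sqrt 1 by rw [Real.sqrt_one]]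
    exact Real.sqrt_le_sqrt (Real.one_le_exp (by norm_num))
  calc C * (n * D) / |V.det| = C * D * n / |V.det| := by ring
  _ ≤ C * D * Real.sqrt (Real.exp 1) * n / |V.det| := by
      have hmain : C * D * n ≤ C * D * Real.sqrt (Real.exp 1) * n := by
        nlinarith [mul_nonneg (mul_nonneg hC0 hD_pos.le) (Nat.cast_nonneg (α := ℝ) n), he]
      exact div_le_div_of_nonneg_right hmain hdet_abs.le
end

section
/- (Proposition 3.3, first inequality) The Lebesgue constant of the extended interpolation system satisfies Λ' ≤ Λ + ‖ℓ'_{n+1}‖_{L∞(K)} · (1 + Λ), i.e. sup_{x∈K} Σ_{i=1}^{n+1} |ℓ'_i(x)| ≤ Λ + (sup_{x∈K} |ℓ'_{n+1}(x)|)·(1 + Λ). -/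
open MvPolynomial

/-- Proposition 3.3, first inequality: the Lebesgue constant of the extended interpolation
system satisfies `Λ' ≤ Λ + ‖ℓ'_{n+1}‖_{L∞(K)} * (1 + Λ)`. -/
theorem stmt_5
    (d n : ℕ) (hd : 0 < d) (hn : 0 < n)
    (x : Fin (n + 1) → (Fin d → ℝ)) (hx : Function.Injective x)
    (φ : Fin (n + 1) → MvPolynomial (Fin d) ℝ)
    (K : Set (Fin d → ℝ))
    (hK : K = convexHull ℝ (Set.range fun i : Fin n => x i.castSucc))
    (hxK : x (Fin.last n) ∈ K)
    (V : Matrix (Fin n) (Fin n) ℝ)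
    (hV : ∀ i j, V i j = eval (x j.castSucc) (φ i.castSucc))
    (hdet : V.det ≠ 0)
    (V' : Matrix (Fin (n + 1)) (Fin (n + 1)) ℝ)
    (hV' : ∀ i j, V' i j = eval (x j) (φ i))
    (hdet' : V'.det ≠ 0)
    (ℓ : Fin n → (Fin d → ℝ) → ℝ)
    (hℓ : ∀ i y, ℓ i y = ∑ j, V⁻¹ i j * eval y (φ j.castSucc))
    (ℓ' : Fin (n + 1) → (Fin d → ℝ) → ℝ)
    (hℓ' : ∀ i y, ℓ' i y = ∑ j, V'⁻¹ i j * eval y (φ j))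
    (Λ Λ' : ℝ)
    (hΛ : Λ = ⨆ y : K, ∑ i, |ℓ i (y : Fin d → ℝ)|)
    (hΛ' : Λ' = ⨆ y : K, ∑ i, |ℓ' i (y : Fin d → ℝ)|) :
    Λ' ≤ Λ + (⨆ y : K, |ℓ' (Fin.last n) (y : Fin d → ℝ)|) * (1 + Λ) := by
  -- basic matrix facts
  have hVV : V⁻¹ * V = 1 := Matrix.nonsing_inv_mul V (isUnit_iff_ne_zero.mpr hdet)
  have hVV' : V'⁻¹ * V' = 1 := Matrix.nonsing_inv_mul V' (isUnit_iff_ne_zero.mpr hdet')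
  have hV'V : V' * V'⁻¹ = 1 := Matrix.mul_nonsing_inv V' (isUnit_iff_ne_zero.mpr hdet')
  set L : Fin n → ℝ := fun i => ℓ i (x (Fin.last n)) with hL
  -- the key row identity for V'⁻¹
  have hrow : ∀ (i : Fin n) (j : Fin (n + 1)),
      V'⁻¹ i.castSucc j =
        (Fin.lastCases 0 (V⁻¹ i) j : ℝ) - L i * V'⁻¹ (Fin.last n) j := by
    intro i j
    set r : Fin (n + 1) → ℝ :=
      fun j => (Fin.lastCases 0 (V⁻¹ i) j : ℝ) - L i * V'⁻¹ (Fin.last n) j with hr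
    have h1 : ∀ j : Fin (n + 1), ∑ k, r k * V' k j =
        if (i.castSucc : Fin (n + 1)) = j then 1 else 0 := by
      intro j
      have hsplit : ∑ k, r k * V' k j =
          (∑ k : Fin n, V⁻¹ i k * V' k.castSucc j)
            - L i * ∑ k, V'⁻¹ (Fin.last n) k * V' k j := by
        calc ∑ k, r k * V' k j
            = ∑ k, ((Fin.lastCases 0 (V⁻¹ i) k : ℝ) * V' k j
                - L i * (V'⁻¹ (Fin.last n) k * V' k j)) := by
              apply Finset.sum_congr rfl
              intro k _
              simp only [hr]
              ring
          _ = (∑ k, (Fin.lastCases 0 (V⁻¹ i) k : ℝ) * V' k j)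
                - L i * ∑ k, V'⁻¹ (Fin.last n) k * V' k j := by
              rw [Finset.sum_sub_distrib, Finset.mul_sum]
          _ = _ := by
              congr 1
              rw [Fin.sum_univ_castSucc]
              simp
      have hlastrow : ∑ k, V'⁻¹ (Fin.last n) k * V' k j =
          if (Fin.last n : Fin (n + 1)) = j then 1 else 0 := by
        have := congrFun (congrFun hVV' (Fin.last n)) j
        simpa [Matrix.mul_apply, Matrix.one_apply] using this
      rw [hsplit, hlastrow]
      rcases Fin.eq_castSucc_or_eq_last j with ⟨j', rfl⟩ | rfl
      · have h2 : ∑ k : Fin n, V⁻¹ i k * V' k.castSucc j'.castSucc =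
            if i = j' then 1 else 0 := by
          have := congrFun (congrFun hVV i) j'
          simp only [Matrix.mul_apply, Matrix.one_apply] at this
          rw [← this]
          apply Finset.sum_congr rfl
          intro k _
          rw [hV' k.castSucc j'.castSucc, hV k j']
        rw [h2]
        have : (Fin.last n : Fin (n + 1)) ≠ j'.castSucc := (Fin.castSucc_lt_last j').ne'
        simp [this, Fin.castSucc_inj]
      · have h3 : ∑ k : Fin n, V⁻¹ i k * V' k.castSucc (Fin.last n) = L i := by
          show _ = ℓ i (x (Fin.last n))
          rw [hℓ i (x (Fin.last n))]
          apply Finset.sum_congr rfl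
          intro k _
          rw [hV' k.castSucc (Fin.last n)]
        rw [h3]
        have : (i.castSucc : Fin (n + 1)) ≠ Fin.last n := (Fin.castSucc_lt_last i).ne
        simp [this]
    -- uniqueness: r must equal the row of V'⁻¹
    have h2 : r j = V'⁻¹ i.castSucc j := by
      have hA : ∑ k, (∑ m, r m * V' m k) * V'⁻¹ k j = V'⁻¹ i.castSucc j := by
        rw [Finset.sum_congr rfl (fun k _ => by rw [h1 k])]
        simp
      have hB : ∑ k, (∑ m, r m * V' m k) * V'⁻¹ k j = r j := by
        calc ∑ k, (∑ m, r m * V' m k) * V'⁻¹ k j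
            = ∑ k, ∑ m, r m * V' m k * V'⁻¹ k j := by
              apply Finset.sum_congr rfl
              intro k _
              rw [Finset.sum_mul]
          _ = ∑ m, ∑ k, r m * V' m k * V'⁻¹ k j := Finset.sum_comm
          _ = ∑ m, r m * (V' * V'⁻¹) m j := by
              apply Finset.sum_congr rfl
              intro m _
              rw [Matrix.mul_apply, Finset.mul_sum]
              apply Finset.sum_congr rfl
              intro k _
              ring
          _ = r j := by
              rw [hV'V]
              simp [Matrix.one_apply]
      rw [← hA, hB]
    rw [← h2]
  -- key identity for the extended Lagrange functions
  have key : ∀ (i : Fin n) (y : Fin d → ℝ),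
      ℓ' i.castSucc y = ℓ i y - L i * ℓ' (Fin.last n) y := by
    intro i y
    rw [hℓ' i.castSucc y]
    calc ∑ j, V'⁻¹ i.castSucc j * eval y (φ j)
        = ∑ j, ((Fin.lastCases 0 (V⁻¹ i) j : ℝ) * eval y (φ j)
            - L i * (V'⁻¹ (Fin.last n) j * eval y (φ j))) := by
          apply Finset.sum_congr rfl
          intro j _
          rw [hrow i j]
          ring
      _ = (∑ j, (Fin.lastCases 0 (V⁻¹ i) j : ℝ) * eval y (φ j))
            - L i * ∑ j, V'⁻¹ (Fin.last n) j * eval y (φ j) := by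
          rw [Finset.sum_sub_distrib, Finset.mul_sum]
      _ = ℓ i y - L i * ℓ' (Fin.last n) y := by
          rw [hℓ i y, hℓ' (Fin.last n) y]
          congr 1
          rw [Fin.sum_univ_castSucc]
          simp
  -- compactness and continuity
  have hKc : IsCompact K := by
    rw [hK]
    exact (Set.finite_range _).isCompact_convexHull ℝ
  haveI : CompactSpace K := isCompact_iff_compactSpace.mp hKc
  haveI : Nonempty K := ⟨⟨x (Fin.last n), hxK⟩⟩
  have hcont : ∀ i, Continuous (ℓ i) := by
    intro i
    have : ℓ i = fun y => ∑ j, V⁻¹ i j * eval y (φ j.castSucc) := funext (hℓ i)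
    rw [this]
    exact continuous_finset_sum _ fun j _ =>
      continuous_const.mul (MvPolynomial.continuous_eval _)
  have hcont' : ∀ i, Continuous (ℓ' i) := by
    intro i
    have : ℓ' i = fun y => ∑ j, V'⁻¹ i j * eval y (φ j) := funext (hℓ' i)
    rw [this]
    exact continuous_finset_sum _ fun j _ =>
      continuous_const.mul (MvPolynomial.continuous_eval _)
  have bddΛ : BddAbove (Set.range fun y : K => ∑ i, |ℓ i (y : Fin d → ℝ)|) :=
    (isCompact_range (continuous_finset_sum _ fun i _ =>
      ((hcont i).comp continuous_subtype_val).abs)).bddAbove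
  have bddM : BddAbove (Set.range fun y : K => |ℓ' (Fin.last n) (y : Fin d → ℝ)|) :=
    (isCompact_range (((hcont' (Fin.last n)).comp continuous_subtype_val).abs)).bddAbove
  set M : ℝ := ⨆ y : K, |ℓ' (Fin.last n) (y : Fin d → ℝ)| with hM
  have hΛle : ∀ y : K, ∑ i, |ℓ i (y : Fin d → ℝ)| ≤ Λ := by
    intro y
    rw [hΛ]
    exact le_ciSup bddΛ y
  have hMle : ∀ y : K, |ℓ' (Fin.last n) (y : Fin d → ℝ)| ≤ M := fun y => le_ciSup bddM y
  have hLsum : ∑ i, |L i| ≤ Λ := hΛle ⟨x (Fin.last n), hxK⟩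
  have hM0 : 0 ≤ M := le_trans (abs_nonneg _) (hMle ⟨x (Fin.last n), hxK⟩)
  -- pointwise bound
  have pointwise : ∀ y : K, ∑ i, |ℓ' i (y : Fin d → ℝ)| ≤ Λ + M * (1 + Λ) := by
    intro y
    rw [Fin.sum_univ_castSucc]
    have step1 : ∑ i : Fin n, |ℓ' i.castSucc (y : Fin d → ℝ)| ≤
        ∑ i : Fin n, (|ℓ i (y : Fin d → ℝ)| + |ℓ' (Fin.last n) (y : Fin d → ℝ)| * |L i|) := by
      apply Finset.sum_le_sum
      intro i _
      rw [key i]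
      calc |ℓ i (y : Fin d → ℝ) - L i * ℓ' (Fin.last n) (y : Fin d → ℝ)|
          ≤ |ℓ i (y : Fin d → ℝ)| + |L i * ℓ' (Fin.last n) (y : Fin d → ℝ)| := abs_sub _ _
        _ = |ℓ i (y : Fin d → ℝ)| + |ℓ' (Fin.last n) (y : Fin d → ℝ)| * |L i| := by
            rw [abs_mul]; ring
    have step2 : ∑ i : Fin n, (|ℓ i (y : Fin d → ℝ)|
        + |ℓ' (Fin.last n) (y : Fin d → ℝ)| * |L i|)
        = ∑ i : Fin n, |ℓ i (y : Fin d → ℝ)|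
          + |ℓ' (Fin.last n) (y : Fin d → ℝ)| * ∑ i, |L i| := by
      rw [Finset.sum_add_distrib, Finset.mul_sum]
    have step3 : |ℓ' (Fin.last n) (y : Fin d → ℝ)| * ∑ i, |L i| ≤ M * Λ :=
      mul_le_mul (hMle y) hLsum (Finset.sum_nonneg fun i _ => abs_nonneg _) hM0
    calc ∑ i : Fin n, |ℓ' i.castSucc (y : Fin d → ℝ)| + |ℓ' (Fin.last n) (y : Fin d → ℝ)|
        ≤ (∑ i : Fin n, |ℓ i (y : Fin d → ℝ)|
            + |ℓ' (Fin.last n) (y : Fin d → ℝ)| * ∑ i, |L i|)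
          + |ℓ' (Fin.last n) (y : Fin d → ℝ)| := by
          apply add_le_add_left
          rw [← step2]
          exact step1
      _ ≤ (Λ + M * Λ) + M := by
          apply add_le_add (add_le_add (hΛle y) step3) (hMle y)
      _ = Λ + M * (1 + Λ) := by ring
  rw [hΛ']
  exact ciSup_le pointwise
end

section
/- (Proposition 3.3, second inequality) The new Lagrange basis function satisfies ‖ℓ'_{n+1}‖_{L∞(K)} ≤ |det V / det V'| · ‖φ_{n+1}‖_{L∞(K)} · (1 + Λ). -/
open MvPolynomial

/-- Proposition 3.3, second inequality: the new Lagrange basis function satisfies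
`‖ℓ'_{n+1}‖_{L∞(K)} ≤ |det V / det V'| * ‖φ_{n+1}‖_{L∞(K)} * (1 + Λ)`. -/
theorem stmt_6
    (d n : ℕ) (hd : 0 < d) (hn : 0 < n)
    (x : Fin (n + 1) → (Fin d → ℝ)) (hx : Function.Injective x)
    (φ : Fin (n + 1) → MvPolynomial (Fin d) ℝ)
    (K : Set (Fin d → ℝ))
    (hK : K = convexHull ℝ (Set.range fun i : Fin n => x i.castSucc))
    (hxK : x (Fin.last n) ∈ K)
    (V : Matrix (Fin n) (Fin n) ℝ)
    (hV : ∀ i j, V i j = eval (x j.castSucc) (φ i.castSucc))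
    (hdet : V.det ≠ 0)
    (V' : Matrix (Fin (n + 1)) (Fin (n + 1)) ℝ)
    (hV' : ∀ i j, V' i j = eval (x j) (φ i))
    (hdet' : V'.det ≠ 0)
    (ℓ : Fin n → (Fin d → ℝ) → ℝ)
    (hℓ : ∀ i y, ℓ i y = ∑ j, V⁻¹ i j * eval y (φ j.castSucc))
    (ℓ' : Fin (n + 1) → (Fin d → ℝ) → ℝ)
    (hℓ' : ∀ i y, ℓ' i y = ∑ j, V'⁻¹ i j * eval y (φ j))
    (Λ : ℝ)
    (hΛ : Λ = ⨆ y : K, ∑ i, |ℓ i (y : Fin d → ℝ)|) :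
    (⨆ y : K, |ℓ' (Fin.last n) (y : Fin d → ℝ)|) ≤
      |V.det / V'.det| * (⨆ y : K, |eval (y : Fin d → ℝ) (φ (Fin.last n))|) * (1 + Λ) := by
  have hne : Nonempty K := ⟨⟨x (Fin.last n), hxK⟩⟩
  have hKc : IsCompact K := hK ▸ (Set.finite_range _).isCompact_convexHull (𝕜 := ℝ)
  have hmem : ∀ j : Fin n, x j.castSucc ∈ K := fun j => hK ▸ subset_convexHull ℝ _ ⟨j, rfl⟩
  set c : Fin (n+1) → ℝ := fun j => V'⁻¹ (Fin.last n) j with hc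
  -- the inverse relation
  have hA : ∀ k, ∑ m, c m * V' m k = if Fin.last n = k then 1 else 0 := by
    intro k
    have h := Matrix.nonsing_inv_mul V' (isUnit_iff_ne_zero.mpr hdet')
    have h2 := congrFun (congrFun h (Fin.last n)) k
    simpa [Matrix.mul_apply, Matrix.one_apply] using h2
  set b : Fin n → ℝ := fun j => -(c (Fin.last n)) * eval (x j.castSucc) (φ (Fin.last n)) with hb
  have h1 : (fun m => c m.castSucc) = Matrix.vecMul b V⁻¹ := by
    have hu : Matrix.vecMul (fun m => c m.castSucc) V = b := by
      funext k
      have h3 := hA k.castSucc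
      rw [Fin.sum_univ_castSucc] at h3
      have hne' : Fin.last n ≠ k.castSucc := (Fin.castSucc_lt_last k).ne'
      rw [if_neg hne'] at h3
      simp only [Matrix.vecMul, dotProduct, hb]
      have hrw : ∀ m : Fin n, c m.castSucc * V m k = c m.castSucc * V' m.castSucc k.castSucc := by
        intro m; rw [hV, hV']
      rw [Finset.sum_congr rfl fun m _ => hrw m]
      rw [hV' (Fin.last n) k.castSucc] at h3
      linarith
    calc (fun m => c m.castSucc)
        = Matrix.vecMul (Matrix.vecMul (fun m => c m.castSucc) V) V⁻¹ := by
          rw [Matrix.vecMul_vecMul, Matrix.mul_nonsing_inv V (isUnit_iff_ne_zero.mpr hdet), Matrix.vecMul_one]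
      _ = Matrix.vecMul b V⁻¹ := by rw [hu]
  -- the key identity
  have hkey : ∀ y : Fin d → ℝ, ℓ' (Fin.last n) y =
      c (Fin.last n) * (eval y (φ (Fin.last n)) -
        ∑ j, eval (x j.castSucc) (φ (Fin.last n)) * ℓ j y) := by
    intro y
    rw [hℓ' (Fin.last n) y, Fin.sum_univ_castSucc]
    have hsum : ∑ m : Fin n, V'⁻¹ (Fin.last n) m.castSucc * eval y (φ m.castSucc)
        = -(c (Fin.last n)) * ∑ j, eval (x j.castSucc) (φ (Fin.last n)) * ℓ j y := by
      calc ∑ m : Fin n, V'⁻¹ (Fin.last n) m.castSucc * eval y (φ m.castSucc)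
          = ∑ m : Fin n, (∑ j, b j * V⁻¹ j m) * eval y (φ m.castSucc) := by
            refine Finset.sum_congr rfl fun m _ => ?_
            have := congrFun h1 m
            simp only [Matrix.vecMul, dotProduct] at this
            rw [show V'⁻¹ (Fin.last n) m.castSucc = c m.castSucc from rfl, this]
        _ = ∑ m : Fin n, ∑ j, b j * V⁻¹ j m * eval y (φ m.castSucc) := by
            refine Finset.sum_congr rfl fun m _ => ?_; rw [Finset.sum_mul]
        _ = ∑ j : Fin n, ∑ m, b j * V⁻¹ j m * eval y (φ m.castSucc) := Finset.sum_comm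
        _ = ∑ j : Fin n, b j * ∑ m, V⁻¹ j m * eval y (φ m.castSucc) := by
            refine Finset.sum_congr rfl fun j _ => ?_
            rw [Finset.mul_sum]
            exact Finset.sum_congr rfl fun m _ => by ring
        _ = ∑ j : Fin n, b j * ℓ j y := by
            refine Finset.sum_congr rfl fun j _ => ?_; rw [← hℓ j y]
        _ = -(c (Fin.last n)) * ∑ j, eval (x j.castSucc) (φ (Fin.last n)) * ℓ j y := by
            rw [Finset.mul_sum]
            exact Finset.sum_congr rfl fun j _ => by rw [hb]; ring
    rw [hsum]
    have : V'⁻¹ (Fin.last n) (Fin.last n) = c (Fin.last n) := rfl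
    rw [this]
    ring
  -- the value of c (last)
  have hclast : c (Fin.last n) = V.det / V'.det := by
    have hadj : V'.adjugate (Fin.last n) (Fin.last n) = V.det := by
      rw [Matrix.adjugate_apply, Matrix.det_succ_row _ (Fin.last n)]
      rw [Finset.sum_eq_single (Fin.last n)]
      · have hmat : ((V'.updateRow (Fin.last n) (Pi.single (Fin.last n) 1)).submatrix
            (Fin.last n).succAbove (Fin.last n).succAbove) = V := by
          ext i j
          simp only [Matrix.submatrix_apply, Fin.succAbove_last]
          rw [Matrix.updateRow_ne (Fin.castSucc_lt_last i).ne, hV' , hV]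
        rw [hmat]
        simp [pow_add, ← mul_pow]
      · intro j _ hj
        rw [Matrix.updateRow_self]
        rw [Pi.single_eq_of_ne hj]
        ring
      · simp
    have := Matrix.inv_def V'
    have h4 := congrFun (congrFun this (Fin.last n)) (Fin.last n)
    simp only [Matrix.smul_apply, smul_eq_mul] at h4
    rw [hc]
    simp only [h4, hadj, Ring.inverse_eq_inv']
    field_simp
  -- boundedness facts
  set M := ⨆ y : K, |eval (y : Fin d → ℝ) (φ (Fin.last n))| with hM
  have hcontφ : Continuous fun y : Fin d → ℝ => |eval y (φ (Fin.last n))| :=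
    (MvPolynomial.continuous_eval _).abs
  have hMbdd : BddAbove (Set.range fun y : K => |eval (y : Fin d → ℝ) (φ (Fin.last n))|) := by
    rw [show (Set.range fun y : K => |eval (y : Fin d → ℝ) (φ (Fin.last n))|)
        = (fun z => |eval z (φ (Fin.last n))|) '' K from (Set.image_eq_range (fun z => |eval z (φ (Fin.last n))|) K).symm]
    exact hKc.bddAbove_image hcontφ.continuousOn
  have hφle : ∀ y ∈ K, |eval y (φ (Fin.last n))| ≤ M := fun y hy => le_ciSup hMbdd ⟨y, hy⟩
  have hM0 : 0 ≤ M := le_trans (abs_nonneg _) (hφle _ hxK)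
  have hcontF : Continuous fun y : Fin d → ℝ => ∑ i, |ℓ i y| := by
    refine continuous_finset_sum _ fun i _ => ?_
    have hli : Continuous (ℓ i) := by
      have he : ℓ i = fun y => ∑ j, V⁻¹ i j * eval y (φ j.castSucc) := funext (hℓ i)
      rw [he]
      exact continuous_finset_sum _ fun j _ =>
        continuous_const.mul (MvPolynomial.continuous_eval _)
    exact hli.abs
  have hFbdd : BddAbove (Set.range fun y : K => ∑ i, |ℓ i (y : Fin d → ℝ)|) := by
    rw [show (Set.range fun y : K => ∑ i, |ℓ i (y : Fin d → ℝ)|)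
        = (fun z => ∑ i, |ℓ i z|) '' K from (Set.image_eq_range (fun z => ∑ i, |ℓ i z|) K).symm]
    exact hKc.bddAbove_image hcontF.continuousOn
  have hΛle : ∀ y ∈ K, ∑ i, |ℓ i y| ≤ Λ := fun y hy => hΛ ▸ le_ciSup hFbdd ⟨y, hy⟩
  have hΛ0 : 0 ≤ Λ := le_trans (Finset.sum_nonneg fun _ _ => abs_nonneg _) (hΛle _ hxK)
  apply ciSup_le
  rintro ⟨y, hy⟩
  have hval : |ℓ' (Fin.last n) y| = |V.det / V'.det| *
      |eval y (φ (Fin.last n)) - ∑ j, eval (x j.castSucc) (φ (Fin.last n)) * ℓ j y| := by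
    rw [hkey y, hclast, abs_mul]
  calc |ℓ' (Fin.last n) y|
      = |V.det / V'.det| *
        |eval y (φ (Fin.last n)) - ∑ j, eval (x j.castSucc) (φ (Fin.last n)) * ℓ j y| := hval
    _ ≤ |V.det / V'.det| * (M + M * Λ) := by
        refine mul_le_mul_of_nonneg_left ?_ (abs_nonneg _)
        calc |eval y (φ (Fin.last n)) - ∑ j, eval (x j.castSucc) (φ (Fin.last n)) * ℓ j y|
            ≤ |eval y (φ (Fin.last n))| +
              |∑ j, eval (x j.castSucc) (φ (Fin.last n)) * ℓ j y| := abs_sub _ _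
          _ ≤ M + M * Λ := by
              refine add_le_add (hφle y hy) ?_
              calc |∑ j, eval (x j.castSucc) (φ (Fin.last n)) * ℓ j y|
                  ≤ ∑ j, |eval (x j.castSucc) (φ (Fin.last n)) * ℓ j y| :=
                    Finset.abs_sum_le_sum_abs _ _
                _ ≤ ∑ j, M * |ℓ j y| := by
                    refine Finset.sum_le_sum fun j _ => ?_
                    rw [abs_mul]
                    exact mul_le_mul_of_nonneg_right (hφle _ (hmem j)) (abs_nonneg _)
                _ = M * ∑ j, |ℓ j y| := by rw [Finset.mul_sum]
                _ ≤ M * Λ := mul_le_mul_of_nonneg_left (hΛle y hy) hM0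
    _ = |V.det / V'.det| * M * (1 + Λ) := by ring
end

section
/- For every x ∈ K, the modulus of the determinant of the matrix obtained from V' by replacing its (n+1)-th column with [φ₁(x),…,φ_{n+1}(x)]ᵀ is bounded by |det V| · ‖φ_{n+1}‖_{L∞(K)} · (1 + Λ). -/
open MvPolynomial

/-- For every `y ∈ K`, the modulus of the determinant of the matrix obtained from `V'` by
replacing its `(n+1)`-th column with `[φ₁(y), …, φ_{n+1}(y)]ᵀ` is bounded by
`|det V| * ‖φ_{n+1}‖_{L∞(K)} * (1 + Λ)`. -/
theorem stmt_8
    (d n : ℕ) (hd : 0 < d) (hn : 0 < n)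
    (x : Fin (n + 1) → (Fin d → ℝ)) (hx : Function.Injective x)
    (φ : Fin (n + 1) → MvPolynomial (Fin d) ℝ)
    (K : Set (Fin d → ℝ))
    (hK : K = convexHull ℝ (Set.range fun i : Fin n => x i.castSucc))
    (V : Matrix (Fin n) (Fin n) ℝ)
    (hV : ∀ i j, V i j = eval (x j.castSucc) (φ i.castSucc))
    (hdet : V.det ≠ 0)
    (V' : Matrix (Fin (n + 1)) (Fin (n + 1)) ℝ)
    (hV' : ∀ i j, V' i j = eval (x j) (φ i))
    (ℓ : Fin n → (Fin d → ℝ) → ℝ)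
    (hℓ : ∀ i y, ℓ i y = ∑ j, V⁻¹ i j * eval y (φ j.castSucc))
    (Λ : ℝ)
    (hΛ : Λ = ⨆ y : K, ∑ i, |ℓ i (y : Fin d → ℝ)|) :
    ∀ y ∈ K,
      |(V'.updateCol (Fin.last n) (fun i => eval y (φ i))).det| ≤
        |V.det| * (⨆ z : K, |eval (z : Fin d → ℝ) (φ (Fin.last n))|) * (1 + Λ) := by
  intro y hy
  haveI : Nonempty (Fin n) := ⟨⟨0, hn⟩⟩
  have hxK : ∀ j : Fin n, x j.castSucc ∈ K := by
    intro j
    rw [hK]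
    exact subset_convexHull ℝ _ ⟨j, rfl⟩
  haveI : Nonempty K := ⟨⟨_, hxK ⟨0, hn⟩⟩⟩
  have hKc : IsCompact K := by
    rw [hK]; exact (Set.finite_range _).isCompact_convexHull ℝ
  -- boundedness facts
  have hbddS : BddAbove (Set.range fun z : K => |eval (z : Fin d → ℝ) (φ (Fin.last n))|) := by
    simpa [Set.image_eq_range] using
      hKc.bddAbove_image ((continuous_abs.comp (MvPolynomial.continuous_eval _)).continuousOn)
  have hbddL : BddAbove (Set.range fun z : K => ∑ i, |ℓ i (z : Fin d → ℝ)|) := by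
    have hcont : Continuous fun z : Fin d → ℝ => ∑ i, |ℓ i z| := by
      have heq : (fun z : Fin d → ℝ => ∑ i, |ℓ i z|) =
          fun z => ∑ i : Fin n, |∑ j, V⁻¹ i j * eval z (φ j.castSucc)| := by
        funext z; simp_rw [hℓ]
      rw [heq]
      exact continuous_finset_sum _ fun i _ => (continuous_finset_sum _ fun j _ =>
        (continuous_const.mul (MvPolynomial.continuous_eval _))).abs
    simpa [Set.image_eq_range] using hKc.bddAbove_image hcont.continuousOn
  set S : ℝ := ⨆ z : K, |eval (z : Fin d → ℝ) (φ (Fin.last n))| with hSdef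
  have hS_le : ∀ z ∈ K, |eval z (φ (Fin.last n))| ≤ S := fun z hz =>
    le_ciSup hbddS (⟨z, hz⟩ : K)
  have hS0 : 0 ≤ S := le_trans (abs_nonneg _) (hS_le _ (hxK ⟨0, hn⟩))
  have hΛ_le : ∑ i, |ℓ i y| ≤ Λ := by
    rw [hΛ]; exact le_ciSup hbddL (⟨y, hy⟩ : K)
  -- key determinant identity
  have hVunit : IsUnit V.det := isUnit_iff_ne_zero.mpr hdet
  have hinv : V * V⁻¹ = 1 := Matrix.mul_nonsing_inv V hVunit
  set c : ℝ := eval y (φ (Fin.last n)) - ∑ j, ℓ j y * eval (x j.castSucc) (φ (Fin.last n))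
    with hcdef
  have vdecomp : (fun i => eval y (φ i)) =
      (∑ j : Fin n, ℓ j y • (fun i : Fin (n+1) => V' i j.castSucc)) + c • (Pi.single (Fin.last n) 1 : Fin (n+1) → ℝ) := by
    funext i
    induction i using Fin.lastCases with
    | last =>
      simp only [Pi.add_apply, Pi.smul_apply, smul_eq_mul, Finset.sum_apply,
        Pi.single_eq_same, mul_one, hcdef]
      simp_rw [hV']
      ring
    | cast k =>
      have hne : k.castSucc ≠ Fin.last n := (Fin.castSucc_lt_last k).ne
      simp only [Pi.add_apply, Pi.smul_apply, smul_eq_mul, Finset.sum_apply,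
        Pi.single_eq_of_ne hne, mul_zero, add_zero]
      have : ∀ j : Fin n, V' k.castSucc j.castSucc = V k j := by
        intro j; rw [hV', hV]
      simp_rw [this, hℓ]
      have : ∑ j : Fin n, (∑ m, V⁻¹ j m * eval y (φ m.castSucc)) * V k j
          = ∑ m : Fin n, (V * V⁻¹) k m * eval y (φ m.castSucc) := by
        simp_rw [Matrix.mul_apply, Finset.sum_mul]
        rw [Finset.sum_comm]
        apply Finset.sum_congr rfl; intro m _
        apply Finset.sum_congr rfl; intro j _
        ring
      rw [this, hinv]
      simp [Matrix.one_apply]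
  have lemA : (V'.updateCol (Fin.last n) (Pi.single (Fin.last n) 1)).det = V.det := by
    rw [Matrix.det_succ_column _ (Fin.last n)]
    rw [Finset.sum_eq_single (Fin.last n)]
    · have hsub : (V'.updateCol (Fin.last n) (Pi.single (Fin.last n) 1)).submatrix
          (Fin.last n).succAbove (Fin.last n).succAbove = V := by
        ext i j
        rw [Matrix.submatrix_apply, Fin.succAbove_last, Matrix.updateCol_ne
          (Fin.castSucc_lt_last j).ne, hV', hV]
      rw [hsub]
      have hs : ((-1:ℝ)) ^ ((Fin.last n : ℕ) + (Fin.last n : ℕ)) = 1 :=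
        Even.neg_one_pow ⟨n, by simp⟩
      simp [Matrix.updateCol_self, hs]
    · intro i _ hi
      rw [Matrix.updateCol_self]
      rw [Pi.single_eq_of_ne hi]
      ring
    · intro h; exact absurd (Finset.mem_univ _) h
  have hD : (V'.updateCol (Fin.last n) (fun i => eval y (φ i))).det = c * V.det := by
    have h1 : (V'.updateCol (Fin.last n) (fun i => eval y (φ i))).det
        = Matrix.cramer V' (fun i => eval y (φ i)) (Fin.last n) := rfl
    rw [h1, vdecomp, map_add, map_sum]
    simp only [map_smul, Pi.add_apply, Finset.sum_apply, Pi.smul_apply, smul_eq_mul]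
    have h2 : ∀ j : Fin n, Matrix.cramer V' (fun i => V' i j.castSucc) (Fin.last n) = 0 := by
      intro j
      rw [Matrix.cramer_row_self V' _ j.castSucc (fun i => rfl)]
      exact Pi.single_eq_of_ne (Fin.castSucc_lt_last j).ne.symm _
    have h3 : Matrix.cramer V' (Pi.single (Fin.last n) 1) (Fin.last n) = V.det := lemA
    simp [h2, h3]
  rw [hD, abs_mul, mul_comm |c|]
  rw [mul_assoc]
  apply mul_le_mul_of_nonneg_left _ (abs_nonneg _)
  have hc : |c| ≤ S * (1 + Λ) := by
    have h1 : |c| ≤ |eval y (φ (Fin.last n))| + ∑ j, |ℓ j y| * |eval (x j.castSucc) (φ (Fin.last n))| := by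
      rw [hcdef]
      refine (abs_sub _ _).trans ?_
      gcongr
      exact (Finset.abs_sum_le_sum_abs _ _).trans (le_of_eq (by simp [abs_mul]))
    have h2 : ∑ j : Fin n, |ℓ j y| * |eval (x j.castSucc) (φ (Fin.last n))| ≤ (∑ j, |ℓ j y|) * S := by
      rw [Finset.sum_mul]
      exact Finset.sum_le_sum fun j _ =>
        mul_le_mul_of_nonneg_left (hS_le _ (hxK j)) (abs_nonneg _)
    calc |c| ≤ |eval y (φ (Fin.last n))| + ∑ j, |ℓ j y| * |eval (x j.castSucc) (φ (Fin.last n))| := h1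
      _ ≤ S + (∑ j, |ℓ j y|) * S := add_le_add (hS_le _ hy) h2
      _ ≤ S + Λ * S := add_le_add (le_refl S) (mul_le_mul_of_nonneg_right hΛ_le hS0)
      _ = S * (1 + Λ) := by ring
  exact hc
end

section
/- (Correctness of the Lagrange basis update formulas) Assume det V ≠ 0 and det V' ≠ 0. Then the denominator δ = φ_{n+1}(x_{n+1}) − Σ_{i=1}^n ℓ_i(x_{n+1}) φ_{n+1}(x_i) is nonzero (indeed δ = det V' / det V), and the functions defined by ℓ'_{n+1}(x) = ( φ_{n+1}(x) − Σ_{i=1}^n ℓ_i(x) φ_{n+1}(x_i) ) / δ and ℓ'_i(x) = ℓ_i(x) − ℓ'_{n+1}(x) · ℓ_i(x_{n+1}) for 1 ≤ i ≤ n satisfy the Kronecker property ℓ'_i(x_j) = δ_{i,j} for all 1 ≤ i, j ≤ n+1; consequently they coincide with the Lagrange basis functions Σ_{j=1}^{n+1} (V'⁻¹)_{i,j} φ_j of the extended system. -/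
open MvPolynomial

/-- Correctness of the Lagrange basis update formulas: if `det V ≠ 0` and `det V' ≠ 0`, then
the denominator `δ = φ_{n+1}(x_{n+1}) − ∑ i, ℓ i (x_{n+1}) * φ_{n+1}(x i)` is nonzero
(indeed `δ = det V' / det V`), and the updated functions
`ℓ'_{n+1} = (φ_{n+1} − ∑ i, ℓ i • φ_{n+1}(x i)) / δ` and
`ℓ'_i = ℓ_i − ℓ'_{n+1} · ℓ_i(x_{n+1})` satisfy the Kronecker property and hence coincide with
the Lagrange basis functions `∑ j, (V'⁻¹)_{i,j} φ_j` of the extended system. -/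
theorem stmt_10
    (d n : ℕ) (hd : 0 < d) (hn : 0 < n)
    (x : Fin (n + 1) → (Fin d → ℝ)) (hx : Function.Injective x)
    (φ : Fin (n + 1) → MvPolynomial (Fin d) ℝ)
    (V : Matrix (Fin n) (Fin n) ℝ)
    (hV : ∀ i j, V i j = eval (x j.castSucc) (φ i.castSucc))
    (hdet : V.det ≠ 0)
    (V' : Matrix (Fin (n + 1)) (Fin (n + 1)) ℝ)
    (hV' : ∀ i j, V' i j = eval (x j) (φ i))
    (hdet' : V'.det ≠ 0)
    (ℓ : Fin n → (Fin d → ℝ) → ℝ)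
    (hℓ : ∀ i y, ℓ i y = ∑ j, V⁻¹ i j * eval y (φ j.castSucc))
    (δ : ℝ)
    (hδ : δ = eval (x (Fin.last n)) (φ (Fin.last n)) -
      ∑ i : Fin n, ℓ i (x (Fin.last n)) * eval (x i.castSucc) (φ (Fin.last n)))
    (ℓ' : Fin (n + 1) → (Fin d → ℝ) → ℝ)
    (hℓ'last : ∀ y, ℓ' (Fin.last n) y =
      (eval y (φ (Fin.last n)) -
        ∑ i : Fin n, ℓ i y * eval (x i.castSucc) (φ (Fin.last n))) / δ)
    (hℓ'cast : ∀ (i : Fin n) (y : Fin d → ℝ),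
      ℓ' i.castSucc y = ℓ i y - ℓ' (Fin.last n) y * ℓ i (x (Fin.last n))) :
    δ ≠ 0 ∧ δ = V'.det / V.det ∧
      (∀ i j : Fin (n + 1), ℓ' i (x j) = if i = j then 1 else 0) ∧
      (∀ (i : Fin (n + 1)) (y : Fin d → ℝ), ℓ' i y = ∑ j, V'⁻¹ i j * eval y (φ j)) := by
  -- Kronecker property of ℓ
  have hVinv : V⁻¹ * V = 1 := Matrix.nonsing_inv_mul V (isUnit_iff_ne_zero.mpr hdet)
  have hK : ∀ i j : Fin n, ℓ i (x j.castSucc) = if i = j then 1 else 0 := by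
    intro i j
    rw [hℓ]
    have h1 : ∑ k, V⁻¹ i k * eval (x j.castSucc) (φ k.castSucc) = (V⁻¹ * V) i j := by
      rw [Matrix.mul_apply]
      exact Finset.sum_congr rfl fun k _ => by rw [hV]
    rw [h1, hVinv, Matrix.one_apply]
  set b : Fin n → ℝ := fun i => eval (x i.castSucc) (φ (Fin.last n)) with hb
  set c : Fin n → ℝ := fun k => ∑ i, b i * V⁻¹ i k with hc
  have hsum : ∀ y, ∑ i, ℓ i y * b i = ∑ k, c k * eval y (φ k.castSucc) := by
    intro y
    simp only [hℓ, hc, Finset.sum_mul]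
    rw [Finset.sum_comm]
    exact Finset.sum_congr rfl fun k _ => Finset.sum_congr rfl fun i _ => by ring
  set u : Fin (n+1) → ℝ := fun i => Fin.lastCases 1 (fun k => -(c k)) i with hu
  set w : Fin (n+1) → ℝ := fun j => eval (x j) (φ (Fin.last n)) - ∑ i : Fin n, ℓ i (x j) * b i
    with hw
  have hrow : (∑ k, u k • V' k) = w := by
    funext j
    rw [Finset.sum_apply, Fin.sum_univ_castSucc]
    simp only [hu, Fin.lastCases_castSucc, Fin.lastCases_last, Pi.smul_apply, smul_eq_mul,
      one_mul, hw, hsum (x j)]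
    simp only [hV']
    simp only [neg_mul, Finset.sum_neg_distrib]
    ring
  have hw0 : ∀ j : Fin n, w j.castSucc = 0 := by
    intro j
    simp only [hw, hK, ite_mul, one_mul, zero_mul, Finset.sum_ite_eq', Finset.mem_univ, if_true]
    exact sub_self _
  have hwlast : w (Fin.last n) = δ := by rw [hw, hδ]
  set M := V'.updateRow (Fin.last n) w with hM
  have hdetM : M.det = V'.det := by
    rw [hM, ← hrow, Matrix.det_updateRow_sum]
    simp [hu]
  have hMsub : M.submatrix Fin.castSucc Fin.castSucc = V := by
    ext i j
    rw [Matrix.submatrix_apply, hM, Matrix.updateRow_ne (Fin.castSucc_lt_last i).ne, hV', hV]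
  have hdetM2 : M.det = δ * V.det := by
    rw [Matrix.det_succ_row M (Fin.last n), Fin.sum_univ_castSucc]
    have hz : ∀ j : Fin n, (-1:ℝ) ^ ((Fin.last n : ℕ) + (j.castSucc : ℕ)) *
        M (Fin.last n) j.castSucc *
        (M.submatrix (Fin.last n).succAbove (j.castSucc).succAbove).det = 0 := by
      intro j
      rw [hM, Matrix.updateRow_self, hw0 j]
      ring
    rw [Finset.sum_congr rfl fun j _ => hz j, Finset.sum_const_zero, zero_add]
    rw [hM, Matrix.updateRow_self, hwlast]
    rw [Fin.succAbove_last, ← hM, hMsub]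
    have : (-1:ℝ) ^ ((Fin.last n : ℕ) + (Fin.last n : ℕ)) = 1 :=
      Even.neg_one_pow ⟨(Fin.last n : ℕ), rfl⟩
    rw [this]; ring
  have hdd : V'.det = δ * V.det := by rw [← hdetM, hdetM2]
  have hδdet : δ = V'.det / V.det := by rw [hdd]; field_simp
  have hδ0 : δ ≠ 0 := by
    intro h
    rw [h, zero_mul] at hdd
    exact hdet' hdd
  -- Kronecker property of ℓ'
  have hlast0 : ∀ j : Fin n, ℓ' (Fin.last n) (x j.castSucc) = 0 := by
    intro j
    rw [hℓ'last]
    have h1 : ∑ i : Fin n, ℓ i (x j.castSucc) * eval (x i.castSucc) (φ (Fin.last n)) =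
        eval (x j.castSucc) (φ (Fin.last n)) := by
      simp [hK, ite_mul]
    rw [h1, sub_self, zero_div]
  have hlast1 : ℓ' (Fin.last n) (x (Fin.last n)) = 1 := by
    rw [hℓ'last, ← hδ, div_self hδ0]
  have hKron : ∀ i j : Fin (n + 1), ℓ' i (x j) = if i = j then 1 else 0 := by
    intro i j
    induction i using Fin.lastCases with
    | last =>
      induction j using Fin.lastCases with
      | last => rw [hlast1, if_pos rfl]
      | cast j => rw [hlast0 j, if_neg (Fin.castSucc_lt_last j).ne']
    | cast i =>
      induction j using Fin.lastCases with
      | last =>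
        rw [hℓ'cast, hlast1, if_neg (Fin.castSucc_lt_last i).ne]
        ring
      | cast j =>
        rw [hℓ'cast, hlast0 j, hK, zero_mul, sub_zero]
        simp [Fin.castSucc_inj]
  -- closed form of ℓ' and identification with V'⁻¹
  set L : Fin n → ℝ := fun i => ℓ i (x (Fin.last n)) with hL
  set Clast : Fin (n+1) → ℝ := fun j => Fin.lastCases (1/δ) (fun k => -(c k)/δ) j with hCl
  set C : Matrix (Fin (n+1)) (Fin (n+1)) ℝ := fun i =>
    Fin.lastCases Clast (fun i' j => (Fin.lastCases 0 (V⁻¹ i') j : ℝ) - L i' * Clast j) i with hC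
  have hAlast : ∀ y, ℓ' (Fin.last n) y = ∑ j, Clast j * eval y (φ j) := by
    intro y
    rw [hℓ'last, hsum, Fin.sum_univ_castSucc]
    simp only [hCl, Fin.lastCases_castSucc, Fin.lastCases_last]
    rw [sub_div, Finset.sum_div]
    have : ∀ k : Fin n, c k * eval y (φ k.castSucc) / δ =
        -(-(c k) / δ * eval y (φ k.castSucc)) := fun k => by ring
    simp only [this, Finset.sum_neg_distrib]
    ring
  have hA : ∀ i y, ℓ' i y = ∑ j, C i j * eval y (φ j) := by
    intro i y
    induction i using Fin.lastCases with
    | last =>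
      rw [hAlast]
      simp only [hC, Fin.lastCases_last]
    | cast i =>
      rw [hℓ'cast, hAlast, hℓ]
      simp only [hC, Fin.lastCases_castSucc, hL, sub_mul, Finset.sum_sub_distrib]
      congr 1
      · rw [Fin.sum_univ_castSucc]
        simp only [Fin.lastCases_castSucc, Fin.lastCases_last, zero_mul, add_zero]
      · rw [Finset.sum_mul]
        exact Finset.sum_congr rfl fun j _ => by ring
  have hCV : C * V' = 1 := by
    ext i j
    rw [Matrix.mul_apply]
    have h1 : ∑ k, C i k * V' k j = ℓ' i (x j) := by
      rw [hA]
      exact Finset.sum_congr rfl fun k _ => by rw [hV']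
    rw [h1, hKron, Matrix.one_apply]
  have hCinv : V'⁻¹ = C := Matrix.inv_eq_left_inv hCV
  refine ⟨hδ0, hδdet, hKron, fun i y => ?_⟩
  rw [hA, hCinv]
end
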